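/- Let (A_i)_{i∈I} be a family of closed convex subsets of ℝⁿ with 0 ∈ ⋂_{i∈I} A_i, and let (t_i)_{i∈I} ⊆ ℝ with sup_{i∈I} t_i ≤ 0. Then for every x̄* ∈ ri(⋃_{J∈𝓕(I)} Σ_{j∈J} A_j), one has min_{x∈ℝⁿ} ( Σ^R_{i∈I} (σ_{A_i}(x) − t_i) − ⟨x̄*,x⟩ ) = sup { −Σ_{j∈J} t_j : J ∈ 𝓕(I), x̄* ∈ Σ_{j∈J} A_j }, with the minimum on the left attained. -/

import Mathlib

open scoped Pointwise Topology
open Set Matrix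

noncomputable section

variable {n : ℕ} {ι : Type*}

/-- Fenchel conjugate of `f : ℝⁿ → ℝ ∪ {+∞}` (modeled as `EReal`-valued). -/
def fconj (f : (Fin n → ℝ) → EReal) (p : Fin n → ℝ) : EReal :=
  ⨆ x : Fin n → ℝ, ((p ⬝ᵥ x : ℝ) : EReal) - f x

/-- Effective domain. -/
def fdom (f : (Fin n → ℝ) → EReal) : Set (Fin n → ℝ) := {x | f x ≠ ⊤}

/-- Domain of the conjugate. -/
def fdomStar (f : (Fin n → ℝ) → EReal) : Set (Fin n → ℝ) := {p | fconj f p ≠ ⊤}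

/-- Epigraph of the conjugate. -/
def fepiStar (f : (Fin n → ℝ) → EReal) : Set ((Fin n → ℝ) × ℝ) :=
  {q | fconj f q.1 ≤ (q.2 : EReal)}

/-- Proper function: never `-∞`, not identically `+∞`. -/
def EProper {X : Type*} (f : X → EReal) : Prop := (∀ x, f x ≠ ⊥) ∧ ∃ x, f x ≠ ⊤

/-- Convexity of an extended-real-valued function, via its epigraph. -/
def EConvexFn {X : Type*} [AddCommGroup X] [Module ℝ X] (f : X → EReal) : Prop :=
  Convex ℝ {q : X × ℝ | f q.1 ≤ (q.2 : EReal)}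

/-- Robust sum of a family of functions. -/
def rsum {X : Type*} (f : ι → X → EReal) (x : X) : EReal :=
  ⨆ (J : Finset ι) (_ : J.Nonempty), ∑ j ∈ J, f j x

/-- Optimal value of the primal problem `(RP_p)`. -/
def fprimalVal (f : (Fin n → ℝ) → EReal) (p : Fin n → ℝ) : EReal :=
  ⨅ x : Fin n → ℝ, f x - ((p ⬝ᵥ x : ℝ) : EReal)

/-- Optimal solution set of the primal problem `(RP_p)`. -/
def fprimalSol (f : (Fin n → ℝ) → EReal) (p : Fin n → ℝ) : Set (Fin n → ℝ) :=
  {x | f x - ((p ⬝ᵥ x : ℝ) : EReal) = fprimalVal f p}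

/-- Optimal value of the dual problem `(RD_p)`. -/
def fdualVal (f : ι → (Fin n → ℝ) → EReal) (p : Fin n → ℝ) : EReal :=
  ⨆ (J : Finset ι) (_ : J.Nonempty) (xs : ι → Fin n → ℝ) (_ : ∑ j ∈ J, xs j = p),
    -∑ j ∈ J, fconj (f j) (xs j)

/-- Support function of a subset of `ℝⁿ`. -/
def fsuppFn (A : Set (Fin n → ℝ)) (x : Fin n → ℝ) : EReal :=
  ⨆ a ∈ A, ((a ⬝ᵥ x : ℝ) : EReal)

/- ### Auxiliary lemmas -/

def erealCoeHom : ℝ →+ EReal := ⟨⟨Real.toEReal, EReal.coe_zero⟩, EReal.coe_add⟩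

lemma coe_finsum (J : Finset ι) (u : ι → ℝ) :
    ((∑ j ∈ J, u j : ℝ) : EReal) = ∑ j ∈ J, ((u j : ℝ) : EReal) :=
  map_sum erealCoeHom u J

lemma sumdot (J : Finset ι) (g : ι → Fin n → ℝ) (x : Fin n → ℝ) :
    (∑ j ∈ J, g j) ⬝ᵥ x = ∑ j ∈ J, g j ⬝ᵥ x := by
  classical
  induction J using Finset.induction_on with
  | empty => simp
  | @insert _ _ h ih => rw [Finset.sum_insert h, Finset.sum_insert h, add_dotProduct, ih]

lemma zero_mem_setSum (A : ι → Set (Fin n → ℝ)) (h0 : ∀ i, (0 : Fin n → ℝ) ∈ A i)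
    (J : Finset ι) : (0 : Fin n → ℝ) ∈ ∑ j ∈ J, A j := by
  rw [Set.mem_finset_sum]
  exact ⟨fun _ => 0, fun {i} _ => h0 i, by simp⟩

lemma setSum_mono (A : ι → Set (Fin n → ℝ)) (h0 : ∀ i, (0 : Fin n → ℝ) ∈ A i)
    {J K : Finset ι} (h : J ⊆ K) : (∑ j ∈ J, A j) ⊆ ∑ j ∈ K, A j := by
  classical
  intro x hx
  rw [Set.mem_finset_sum] at hx ⊢
  obtain ⟨g, hg, rfl⟩ := hx
  refine ⟨fun i => if i ∈ J then g i else 0, ?_, ?_⟩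
  · intro i _
    by_cases hiJ : i ∈ J
    · simpa [hiJ] using hg hiJ
    · simp [hiJ, h0 i]
  · rw [Finset.sum_ite_mem, Finset.inter_eq_right.2 h]

lemma convex_setSum (A : ι → Set (Fin n → ℝ)) (hconv : ∀ i, Convex ℝ (A i))
    (J : Finset ι) : Convex ℝ (∑ j ∈ J, A j) := by
  classical
  induction J using Finset.induction_on with
  | empty => rw [Finset.sum_empty, ← Set.singleton_zero]; exact convex_singleton 0
  | @insert _ _ h ih => rw [Finset.sum_insert h]; exact (hconv _).add ih

lemma sum_supp_le (A : ι → Set (Fin n → ℝ)) (hne : ∀ i, (A i).Nonempty) (x : Fin n → ℝ)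
    (J : Finset ι) : ∀ (r : ℝ),
      (∀ sel : ι → (Fin n → ℝ), (∀ j ∈ J, sel j ∈ A j) → (∑ j ∈ J, sel j ⬝ᵥ x) ≤ r) →
      ∑ j ∈ J, fsuppFn (A j) x ≤ (r : EReal) := by
  classical
  induction J using Finset.induction_on with
  | empty =>
    intro r hr
    have h0 : (0 : ℝ) ≤ r := by simpa using hr (fun _ => 0) (by simp)
    simpa using EReal.coe_le_coe_iff.2 h0
  | @insert k J' hk ih =>
    intro r hr
    rw [Finset.sum_insert hk]
    have hY : ∀ a ∈ A k, ∑ j ∈ J', fsuppFn (A j) x ≤ ((r - a ⬝ᵥ x : ℝ) : EReal) := by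
      intro a ha
      apply ih
      intro sel hsel
      have h1 := hr (Function.update sel k a) ?_
      · rw [Finset.sum_insert hk, Function.update_self] at h1
        have h2 : ∑ j ∈ J', Function.update sel k a j ⬝ᵥ x = ∑ j ∈ J', sel j ⬝ᵥ x := by
          apply Finset.sum_congr rfl
          intro j hj
          rw [Function.update_of_ne (ne_of_mem_of_not_mem hj hk)]
        rw [h2] at h1
        linarith
      · intro j hj
        rcases Finset.mem_insert.1 hj with rfl | hj'
        · rwa [Function.update_self]
        · rw [Function.update_of_ne (ne_of_mem_of_not_mem hj' hk)]
          exact hsel j hj'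
    obtain ⟨a₀, ha₀⟩ := hne k
    set Y := ∑ j ∈ J', fsuppFn (A j) x with hYc
    clear_value Y
    induction Y using EReal.rec with
    | bot => rw [add_comm, EReal.bot_add]; exact bot_le
    | coe y =>
      have hky : ∀ a ∈ A k, (a ⬝ᵥ x : ℝ) ≤ r - y := by
        intro a ha
        have := hY a ha
        rw [EReal.coe_le_coe_iff] at this
        linarith
      have hsk : fsuppFn (A k) x ≤ ((r - y : ℝ) : EReal) :=
        iSup₂_le fun a ha => EReal.coe_le_coe_iff.2 (by linarith [hky a ha])
      calc fsuppFn (A k) x + ((y : ℝ) : EReal)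
          ≤ ((r - y : ℝ) : EReal) + ((y : ℝ) : EReal) := add_le_add hsk le_rfl
        _ = (r : EReal) := by rw [← EReal.coe_add]; norm_num
    | top =>
      exfalso
      have := hY a₀ ha₀
      rw [top_le_iff] at this
      exact EReal.coe_ne_top _ this

set_option maxHeartbeats 1000000 in
/-- **Proposition 5.3.** -/
theorem subaffine_strong_duality_fin [Nonempty ι]
    (A : ι → Set (Fin n → ℝ)) (t : ι → ℝ) (p : Fin n → ℝ)
    (hclosed : ∀ i, IsClosed (A i)) (hconv : ∀ i, Convex ℝ (A i))
    (h0 : ∀ i, (0 : Fin n → ℝ) ∈ A i) (ht : ∀ i, t i ≤ 0)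
    (hri : p ∈ intrinsicInterior ℝ (⋃ J ∈ {J : Finset ι | J.Nonempty}, ∑ j ∈ J, A j)) :
    (fprimalSol (rsum (fun i x => fsuppFn (A i) x - (t i : EReal))) p).Nonempty ∧
    fprimalVal (rsum (fun i x => fsuppFn (A i) x - (t i : EReal))) p =
      ⨆ (J : Finset ι) (_ : J.Nonempty) (_ : p ∈ ∑ j ∈ J, A j),
        ((-(∑ j ∈ J, t j) : ℝ) : EReal) := by
  classical
  set C : Set (Fin n → ℝ) := ⋃ J ∈ {J : Finset ι | J.Nonempty}, ∑ j ∈ J, A j with hC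
  set F : ι → (Fin n → ℝ) → EReal := fun i x => fsuppFn (A i) x - (t i : EReal) with hF
  set D : EReal := ⨆ (J : Finset ι) (_ : J.Nonempty) (_ : p ∈ ∑ j ∈ J, A j),
      ((-(∑ j ∈ J, t j) : ℝ) : EReal) with hD
  have hmemC : ∀ {a : Fin n → ℝ}, (∃ J : Finset ι, J.Nonempty ∧ a ∈ ∑ j ∈ J, A j) → a ∈ C := by
    rintro a ⟨J, hJ, ha⟩
    rw [hC]
    exact Set.mem_iUnion₂.2 ⟨J, hJ, ha⟩
  have hmemC' : ∀ {a : Fin n → ℝ}, a ∈ C → ∃ J : Finset ι, J.Nonempty ∧ a ∈ ∑ j ∈ J, A j := by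
    intro a ha
    rw [hC] at ha
    obtain ⟨J, hJ, h⟩ := Set.mem_iUnion₂.1 ha
    exact ⟨J, hJ, h⟩
  have hsupp_ge : ∀ (i : ι) (x : Fin n → ℝ), ∀ a ∈ A i,
      ((a ⬝ᵥ x : ℝ) : EReal) ≤ fsuppFn (A i) x := fun i x a ha =>
    le_iSup₂ (f := fun a (_ : a ∈ A i) => ((a ⬝ᵥ x : ℝ) : EReal)) a ha
  -- weak duality
  have weak : ∀ x : Fin n → ℝ, D ≤ rsum F x - ((p ⬝ᵥ x : ℝ) : EReal) := by
    intro x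
    rw [hD]
    refine iSup_le fun J => iSup_le fun hJ => iSup_le fun hp => ?_
    obtain ⟨g, hg, hgp⟩ := (Set.mem_finset_sum J A p).1 hp
    have h1 : ((p ⬝ᵥ x - ∑ j ∈ J, t j : ℝ) : EReal) ≤ ∑ j ∈ J, F j x := by
      have hdot : p ⬝ᵥ x = ∑ j ∈ J, g j ⬝ᵥ x := by rw [← hgp, sumdot]
      rw [hdot, ← Finset.sum_sub_distrib, coe_finsum]
      refine Finset.sum_le_sum fun j hj => ?_
      rw [EReal.coe_sub]
      exact EReal.sub_le_sub (hsupp_ge j x (g j) (hg hj)) le_rfl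
    have h2 : ∑ j ∈ J, F j x ≤ rsum F x :=
      le_iSup₂ (f := fun J (_ : Finset.Nonempty J) => ∑ j ∈ J, F j x) J hJ
    calc ((-(∑ j ∈ J, t j) : ℝ) : EReal)
        = ((p ⬝ᵥ x - ∑ j ∈ J, t j : ℝ) : EReal) - ((p ⬝ᵥ x : ℝ) : EReal) := by
          rw [← EReal.coe_sub]; norm_num
      _ ≤ rsum F x - ((p ⬝ᵥ x : ℝ) : EReal) := EReal.sub_le_sub (h1.trans h2) le_rfl
  have hpC : p ∈ C := intrinsicInterior_subset hri
  obtain ⟨J₀, hJ₀ne, hpJ₀⟩ := hmemC' hpC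
  have hp0C : (0 : Fin n → ℝ) ∈ C :=
    hmemC ⟨J₀, hJ₀ne, zero_mem_setSum A h0 J₀⟩
  have hsJnn : ∀ J : Finset ι, (0:ℝ) ≤ -(∑ j ∈ J, t j) :=
    fun J => neg_nonneg.2 (Finset.sum_nonpos fun j _ => ht j)
  have hD0 : (0 : EReal) ≤ D := by
    rw [hD]
    refine le_iSup_of_le J₀ (le_iSup_of_le hJ₀ne (le_iSup_of_le hpJ₀ ?_))
    exact_mod_cast hsJnn J₀
  by_cases hDtop : D = ⊤
  · have hall : ∀ x, rsum F x - ((p ⬝ᵥ x : ℝ) : EReal) = ⊤ :=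
      fun x => top_le_iff.1 (hDtop ▸ weak x)
    have hval : fprimalVal (rsum F) p = ⊤ := by
      rw [fprimalVal]
      simp [hall]
    refine ⟨⟨0, ?_⟩, hval.trans hDtop.symm⟩
    show rsum F 0 - ((p ⬝ᵥ (0 : Fin n → ℝ) : ℝ) : EReal) = fprimalVal (rsum F) p
    rw [hall 0, hval]
  · have hDbot : D ≠ ⊥ := ne_of_gt (lt_of_lt_of_le EReal.bot_lt_zero hD0)
    set d : ℝ := D.toReal with hd
    have hDd : D = (d : EReal) := (EReal.coe_toReal hDtop hDbot).symm
    have hd0 : 0 ≤ d := by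
      rw [hDd] at hD0
      exact_mod_cast hD0
    have hdge : ∀ J : Finset ι, J.Nonempty → p ∈ ∑ j ∈ J, A j → -(∑ j ∈ J, t j) ≤ d := by
      intro J h1 h2
      have hle : ((-(∑ j ∈ J, t j) : ℝ) : EReal) ≤ D := by
        rw [hD]
        exact le_iSup_of_le J (le_iSup_of_le h1 (le_iSup_of_le h2 le_rfl))
      rw [hDd, EReal.coe_le_coe_iff] at hle
      exact hle
    -- the linear span of C
    set L : Submodule ℝ (Fin n → ℝ) := Submodule.span ℝ C with hL
    have hCL : C ⊆ (L : Set (Fin n → ℝ)) := Submodule.subset_span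
    have hp'mem : p ∈ L := hCL hpC
    have h0aff : (0 : Fin n → ℝ) ∈ affineSpan ℝ C := subset_affineSpan ℝ C hp0C
    have hLaff : (L : Set (Fin n → ℝ)) ⊆ (affineSpan ℝ C : Set (Fin n → ℝ)) := by
      intro v hv
      have hdir : v ∈ (affineSpan ℝ C).direction := by
        rw [direction_affineSpan]
        refine Submodule.span_le.2 ?_ hv
        intro c hc
        simpa using vsub_mem_vectorSpan ℝ hc hp0C
      simpa using AffineSubspace.vadd_mem_of_mem_direction hdir h0aff
    -- ε-ball inside C within the affine span
    rw [mem_intrinsicInterior] at hri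
    obtain ⟨q, hq_int, hq⟩ := hri
    obtain ⟨ε, hε, hball⟩ := Metric.mem_nhds_iff.1 (mem_interior_iff_mem_nhds.1 hq_int)
    have hball' : ∀ w : Fin n → ℝ, w ∈ (affineSpan ℝ C : Set (Fin n → ℝ)) →
        dist w p < ε → w ∈ C := by
      intro w hw hdist
      have hmem : (⟨w, hw⟩ : affineSpan ℝ C) ∈ Metric.ball q ε := by
        rw [Metric.mem_ball, Subtype.dist_eq, hq]
        exact hdist
      exact hball hmem
    -- the convex set Ê in L × ℝ
    set p' : ↥L := ⟨p, hp'mem⟩ with hp'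
    set SJ : Finset ι → ℝ := fun J => ∑ j ∈ J, -t j with hSJ
    have hSJ0 : ∀ J, (0:ℝ) ≤ SJ J := fun J =>
      Finset.sum_nonneg fun j _ => neg_nonneg.2 (ht j)
    have hSJmono : ∀ {J K : Finset ι}, J ⊆ K → SJ J ≤ SJ K := fun h =>
      Finset.sum_le_sum_of_subset_of_nonneg h (fun j _ _ => neg_nonneg.2 (ht j))
    set Ebar : Set (↥L × ℝ) :=
      {z | ∃ J : Finset ι, J.Nonempty ∧ ((z.1 : Fin n → ℝ) ∈ ∑ j ∈ J, A j) ∧ z.2 ≤ SJ J}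
      with hEbar
    have hEconv : Convex ℝ Ebar := by
      rintro ⟨z1, s1⟩ ⟨J1, hJ1, hz1, hs1⟩ ⟨z2, s2⟩ ⟨J2, hJ2, hz2, hs2⟩ a b ha hb hab
      refine ⟨J1 ∪ J2, hJ1.mono Finset.subset_union_left, ?_, ?_⟩
      · have hcx := (convex_setSum A hconv (J1 ∪ J2))
          (setSum_mono A h0 Finset.subset_union_left hz1)
          (setSum_mono A h0 Finset.subset_union_right hz2) ha hb hab
        simpa using hcx
      · have e1 : s1 ≤ SJ (J1 ∪ J2) := hs1.trans (hSJmono Finset.subset_union_left)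
        have e2 : s2 ≤ SJ (J1 ∪ J2) := hs2.trans (hSJmono Finset.subset_union_right)
        show a • s1 + b • s2 ≤ SJ (J1 ∪ J2)
        simp only [smul_eq_mul]
        have e3 : a * SJ (J1 ∪ J2) + b * SJ (J1 ∪ J2) = SJ (J1 ∪ J2) := by
          rw [← add_mul, hab, one_mul]
        linarith [mul_nonneg ha (sub_nonneg.2 e1), mul_nonneg hb (sub_nonneg.2 e2), e3]
    have hp'int : ((p', (-1:ℝ)) : ↥L × ℝ) ∈ interior Ebar := by
      rw [mem_interior_iff_mem_nhds, Metric.mem_nhds_iff]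
      refine ⟨min ε 1, lt_min hε one_pos, ?_⟩
      rintro ⟨z, s⟩ hz
      rw [Metric.mem_ball, Prod.dist_eq] at hz
      have hz1 : dist z p' < ε := lt_of_le_of_lt (le_max_left _ _) (lt_of_lt_of_le hz (min_le_left _ _))
      have hz2 : dist s (-1:ℝ) < 1 := lt_of_le_of_lt (le_max_right _ _) (lt_of_lt_of_le hz (min_le_right _ _))
      have hzC : (z : Fin n → ℝ) ∈ C := by
        refine hball' _ (hLaff z.2) ?_
        rw [Subtype.dist_eq] at hz1
        exact hz1
      obtain ⟨J, hJ, hzJ⟩ := hmemC' hzC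
      refine ⟨J, hJ, hzJ, ?_⟩
      have : s < 0 := by
        rw [Real.dist_eq] at hz2
        cases abs_lt.1 hz2
        linarith
      linarith [hSJ0 J]
    have hnotint : ((p', d) : ↥L × ℝ) ∉ interior Ebar := by
      intro hmem
      obtain ⟨δ, hδ, hb2⟩ := Metric.mem_nhds_iff.1 (mem_interior_iff_mem_nhds.1 hmem)
      have hin : ((p', d + δ/2) : ↥L × ℝ) ∈ Ebar := by
        apply hb2
        rw [Metric.mem_ball, Prod.dist_eq]
        have h1 : dist p' p' = 0 := dist_self _
        have h2 : dist (d + δ/2) d = δ/2 := by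
          rw [Real.dist_eq]
          rw [show d + δ/2 - d = δ/2 by ring, abs_of_pos (by linarith)]
        rw [h1, h2]
        rw [max_eq_right (by linarith)]
        linarith
      obtain ⟨J, hJne, hpJ, hle⟩ := hin
      have hge := hdge J hJne hpJ
      have hSJeq : SJ J = -(∑ j ∈ J, t j) := by
        rw [hSJ]
        exact Finset.sum_neg_distrib (f := t)
      rw [hSJeq] at hle
      linarith
    obtain ⟨f, hf⟩ := geometric_hahn_banach_open_point hEconv.interior isOpen_interior hnotint
    set c : ℝ := f (p', d) with hc
    have hfE : ∀ z ∈ Ebar, f z ≤ c := by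
      intro z hz
      have hcomb : ∀ k : ℕ, (((k:ℝ)+1)⁻¹ • ((p', (-1:ℝ)) : ↥L × ℝ)
          + (1 - ((k:ℝ)+1)⁻¹) • z) ∈ interior Ebar := by
        intro k
        refine hEconv.combo_interior_self_mem_interior hp'int hz ?_ ?_ (by ring)
        · positivity
        · have h1 : ((k:ℝ)+1)⁻¹ ≤ 1 := by
            apply inv_le_one_of_one_le₀
            have := Nat.cast_nonneg (α := ℝ) k
            linarith
          linarith
      have h1 : Filter.Tendsto (fun k : ℕ => ((k:ℝ)+1)⁻¹) Filter.atTop (𝓝 0) := by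
        exact Filter.Tendsto.congr (fun k : ℕ => one_div ((k:ℝ)+1)) tendsto_one_div_add_atTop_nhds_zero_nat
      have htend : Filter.Tendsto
          (fun k : ℕ => (((k:ℝ)+1)⁻¹ • ((p', (-1:ℝ)) : ↥L × ℝ) + (1 - ((k:ℝ)+1)⁻¹) • z))
          Filter.atTop (𝓝 z) := by
        have hc1 : Filter.Tendsto (fun _ : ℕ => (1:ℝ)) Filter.atTop (𝓝 1) :=
          tendsto_const_nhds
        have h2 := (h1.smul_const ((p', (-1:ℝ)) : ↥L × ℝ)).add
          ((hc1.sub h1).smul_const z)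
        simpa using h2
      refine le_of_tendsto ((f.continuous.tendsto z).comp htend) ?_
      exact Filter.Eventually.of_forall fun k => (hf _ (hcomb k)).le
    set β : ℝ := f (0, 1) with hβdef
    have hfsplit : ∀ (v : ↥L) (s : ℝ), f (v, s) = f (v, 0) + s * β := by
      intro v s
      have hvs : ((v, s) : ↥L × ℝ) = (v, 0) + s • ((0 : ↥L), (1:ℝ)) := by
        rw [Prod.ext_iff]
        constructor
        · simp
        · simp
      rw [hvs, map_add, f.map_smul, smul_eq_mul, hβdef]
    have hβpos : 0 < β := by
      have h1 : f (p', -1) < c := hf _ hp'int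
      rw [hc] at h1
      nlinarith [hfsplit p' (-1), hfsplit p' d, hd0, h1]
    obtain ⟨M, hM⟩ := Submodule.exists_isCompl L
    set ψ : (Fin n → ℝ) →ₗ[ℝ] ℝ :=
      (f.toLinearMap.comp (LinearMap.inl ℝ ↥L ℝ)).comp (Submodule.linearProjOfIsCompl L M hM)
      with hψdef
    have hψ : ∀ (v : Fin n → ℝ) (hv : v ∈ L), ψ v = f (⟨v, hv⟩, 0) := by
      intro v hv
      have hproj : Submodule.linearProjOfIsCompl L M hM v = ⟨v, hv⟩ :=
        Submodule.linearProjOfIsCompl_apply_left hM ⟨v, hv⟩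
      rw [hψdef]
      simp [LinearMap.comp_apply, hproj]
    set w : Fin n → ℝ := fun i => ψ (Pi.single i 1) with hw
    set xb : Fin n → ℝ := β⁻¹ • w with hxb
    have hdotw : ∀ v : Fin n → ℝ, v ⬝ᵥ xb = β⁻¹ * ψ v := by
      intro v
      have hvw : v ⬝ᵥ w = ψ v := by
        have hsingle : ∀ i : Fin n, (fun j => if i = j then (1:ℝ) else 0) = Pi.single i 1 := by
          intro i; funext j; simp [Pi.single_apply, eq_comm]
        rw [LinearMap.pi_apply_eq_sum_univ ψ v]
        simp only [hsingle]
        simp [dotProduct, hw, smul_eq_mul]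
      rw [hxb, dotProduct_smul, smul_eq_mul, hvw]
    have hkeyreal : ∀ (J : Finset ι), J.Nonempty → ∀ a ∈ ∑ j ∈ J, A j,
        a ⬝ᵥ xb + SJ J ≤ p ⬝ᵥ xb + d := by
      intro J hJ a ha
      have haL : a ∈ L := hCL (hmemC ⟨J, hJ, ha⟩)
      have h1 := hfE (((⟨a, haL⟩ : ↥L), SJ J)) ⟨J, hJ, ha, le_rfl⟩
      rw [hc] at h1
      have e1 := hfsplit ⟨a, haL⟩ (SJ J)
      have e2 := hfsplit p' d
      have ea : ψ a = f ((⟨a, haL⟩ : ↥L), 0) := hψ a haL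
      have ep : ψ p = f (p', 0) := hψ p hp'mem
      rw [hdotw, hdotw]
      have h1' : f ((⟨a, haL⟩ : ↥L), 0) + SJ J * β ≤ f (p', 0) + d * β := by
        rw [e1, e2] at h1; exact h1
      have h3 := mul_le_mul_of_nonneg_left h1' (inv_pos.2 hβpos).le
      have hβne : β ≠ 0 := hβpos.ne'
      have h6a : β⁻¹ * (f ((⟨a, haL⟩ : ↥L), 0) + SJ J * β)
          = β⁻¹ * f ((⟨a, haL⟩ : ↥L), 0) + SJ J := by
        field_simp
      have h6b : β⁻¹ * (f (p', 0) + d * β) = β⁻¹ * f (p', 0) + d := by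
        field_simp
      rw [h6a, h6b] at h3
      rw [ea, ep]
      linarith
    -- upper bound on the primal value at xb
    have hub : rsum F xb ≤ ((p ⬝ᵥ xb + d : ℝ) : EReal) := by
      rw [rsum]
      refine iSup_le fun J => iSup_le fun hJ => ?_
      have hsplit : ∀ j, F j xb = fsuppFn (A j) xb + ((-t j : ℝ) : EReal) := by
        intro j
        rw [hF]
        show fsuppFn (A j) xb - ((t j : ℝ) : EReal) = fsuppFn (A j) xb + ((-t j : ℝ) : EReal)
        rw [sub_eq_add_neg, EReal.coe_neg]
      rw [Finset.sum_congr rfl (fun j _ => hsplit j), Finset.sum_add_distrib]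
      have hs2 : ∑ j ∈ J, ((-t j : ℝ) : EReal) = ((SJ J : ℝ) : EReal) :=
        (coe_finsum J (fun j => -t j)).symm
      have hs1 : ∑ j ∈ J, fsuppFn (A j) xb ≤ ((p ⬝ᵥ xb + d - SJ J : ℝ) : EReal) := by
        apply sum_supp_le A (fun i => ⟨0, h0 i⟩) xb J
        intro sel hsel
        have hm : (∑ j ∈ J, sel j) ∈ ∑ j ∈ J, A j :=
          (Set.mem_finset_sum J A _).2 ⟨sel, fun {j} hj => hsel j hj, rfl⟩
        have hkk := hkeyreal J hJ _ hm
        rw [sumdot] at hkk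
        linarith
      calc ∑ j ∈ J, fsuppFn (A j) xb + ∑ j ∈ J, ((-t j : ℝ) : EReal)
          ≤ ((p ⬝ᵥ xb + d - SJ J : ℝ) : EReal) + ((SJ J : ℝ) : EReal) := by
            rw [hs2]; exact add_le_add hs1 le_rfl
        _ = ((p ⬝ᵥ xb + d : ℝ) : EReal) := by rw [← EReal.coe_add]; norm_num
    have hobj : rsum F xb - ((p ⬝ᵥ xb : ℝ) : EReal) ≤ (d : EReal) := by
      calc rsum F xb - ((p ⬝ᵥ xb : ℝ) : EReal)
          ≤ ((p ⬝ᵥ xb + d : ℝ) : EReal) - ((p ⬝ᵥ xb : ℝ) : EReal) :=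
            EReal.sub_le_sub hub le_rfl
        _ = (d : EReal) := by rw [← EReal.coe_sub]; norm_num
    have heq : rsum F xb - ((p ⬝ᵥ xb : ℝ) : EReal) = (d : EReal) :=
      le_antisymm hobj (hDd ▸ weak xb)
    have hval : fprimalVal (rsum F) p = (d : EReal) := by
      rw [fprimalVal]
      refine le_antisymm (iInf_le_of_le xb heq.le) (le_iInf fun x => hDd ▸ weak x)
    refine ⟨⟨xb, ?_⟩, hval.trans hDd.symm⟩
    show rsum F xb - ((p ⬝ᵥ xb : ℝ) : EReal) = fprimalVal (rsum F) p
    rw [heq, hval]
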